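/- arXiv:2603.06701 — 4 statements merged into one kernel-verified Lean document; each statement's English description precedes it below -/
import Mathlib

section
/- For every integer n ≥ 2 and every θ ∈ ℝ, the function θ ↦ F_{n+1}(θ) is differentiable at θ with derivative F_n(θ); that is, HasDerivAt (fun θ => I^(-(n+1)) * ∑' k : ℕ+, Complex.exp (I*k*θ) / k^(n+1)) (I^(-n) * ∑' k : ℕ+, Complex.exp (I*k*θ) / k^n) θ. -/
open Complex Real Filter

lemma aux_summable (n : ℕ) (hn : 2 ≤ n) : Summable (fun k : ℕ+ => (1 : ℝ) / (k : ℝ) ^ n) := by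
  have := Real.summable_one_div_nat_rpow.2 (by exact_mod_cast (lt_of_lt_of_le one_lt_two (by exact_mod_cast hn)) : (1:ℝ) < n)
  have h : Summable (fun k : ℕ => (1 : ℝ) / (k : ℝ) ^ n) := by
    simpa [Real.rpow_natCast] using this
  exact h.comp_injective PNat.coe_injective

lemma aux_term_deriv (n : ℕ) (k : ℕ+) (θ : ℝ) :
    HasDerivAt (fun θ : ℝ => Complex.exp (I * k * θ) / (k : ℂ) ^ (n + 1))
      (I * Complex.exp (I * k * θ) / (k : ℂ) ^ n) θ := by
  have h0 : HasDerivAt (fun θ : ℝ => ((θ : ℂ))) 1 θ := Complex.ofRealCLM.hasDerivAt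
  have h1 : HasDerivAt (fun θ : ℝ => I * k * (θ : ℂ)) (I * k) θ := by
    simpa using h0.const_mul (I * (k : ℂ))
  have h2 := (h1.cexp).div_const ((k : ℂ) ^ (n + 1))
  have hk : (k : ℂ) ≠ 0 := by exact_mod_cast k.ne_zero
  convert h2 using 1
  · rfl
  field_simp
  ring

/-- Uniform recursion backbone: for every integer `n ≥ 2` and every real `θ`,
`d/dθ F_{n+1}(θ) = F_n(θ)` where `F_n(θ) = i^(-n) ∑_{k≥1} e^{ikθ}/k^n`. -/
theorem backbone_recursion (n : ℕ) (hn : 2 ≤ n) (θ : ℝ) :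
    HasDerivAt
      (fun θ : ℝ => I ^ (-((n : ℤ) + 1)) *
        ∑' k : ℕ+, Complex.exp (I * k * θ) / (k : ℂ) ^ (n + 1))
      (I ^ (-(n : ℤ)) * ∑' k : ℕ+, Complex.exp (I * k * θ) / (k : ℂ) ^ n) θ := by
  have hI : I ≠ 0 := I_ne_zero
  have habs : ∀ (k : ℕ+) (x : ℝ), ‖Complex.exp (I * k * x)‖ = 1 := by
    intro k x
    rw [mul_comm (I * (k:ℂ)) (x:ℂ), ← mul_assoc, Complex.norm_exp]
    simp
  have hsum : HasDerivAt
      (fun θ : ℝ => ∑' k : ℕ+, Complex.exp (I * k * θ) / (k : ℂ) ^ (n + 1))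
      (∑' k : ℕ+, I * Complex.exp (I * k * θ) / (k : ℂ) ^ n) θ := by
    refine hasDerivAt_tsum (u := fun k : ℕ+ => (1 : ℝ) / (k : ℝ) ^ n) (y₀ := θ)
      (aux_summable n hn) (fun k x => aux_term_deriv n k x) (fun k x => ?_) ?_ θ
    · rw [norm_div, norm_mul, habs k x, Complex.norm_I]
      simp [Complex.norm_natCast, abs_pow]
    · apply Summable.of_norm
      apply (aux_summable (n+1) (by omega)).of_nonneg_of_le (fun k => norm_nonneg _)
      intro k
      rw [norm_div, habs k θ]
      simp [Complex.norm_natCast, abs_pow]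
  have h2 := hsum.const_mul (I ^ (-((n : ℤ) + 1)))
  convert h2 using 1
  · rfl
  rw [← tsum_mul_left, ← tsum_mul_left]
  congr 1
  funext k
  rw [show I ^ (-(n:ℤ)) = I ^ (-((n:ℤ)+1)) * I by
    rw [← zpow_add_one₀ hI]; norm_num]
  ring
end

section
/- For every θ ∈ (0, 2π), the function θ ↦ −∑_{k=1}^∞ e^{ikθ}/k² is differentiable at θ with derivative i·log(1 − e^{iθ}), where log denotes the principal branch of the complex logarithm; that is, HasDerivAt (fun θ => -(∑' k : ℕ+, Complex.exp (I*k*θ) / k^2)) (I * Complex.log (1 - Complex.exp (I*θ))) θ. -/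
open Complex Real Filter

lemma norm_exp_I_mul (k : ℕ+) (x : ℝ) : ‖Complex.exp (I * k * x)‖ = 1 := by
  rw [Complex.norm_exp]; simp

lemma term_hasDerivAt (r : ℝ) (k : ℕ+) (y : ℝ) :
    HasDerivAt (fun θ : ℝ => (r:ℂ)^(k:ℕ) * Complex.exp (I * k * θ) / (k:ℂ)^2)
      ((r:ℂ)^(k:ℕ) * (I * k) * Complex.exp (I * k * y) / (k:ℂ)^2) y := by
  have h0 : HasDerivAt (fun θ : ℝ => I * (k:ℂ) * (θ:ℂ)) (I * k) y := by
    simpa using ((hasDerivAt_id y).ofReal_comp.const_mul (I * (k:ℂ)))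
  have h2 := (h0.cexp.const_mul ((r:ℂ)^(k:ℕ))).div_const ((k:ℂ)^2)
  refine h2.congr_deriv ?_
  ring

lemma pnat_hasSum_log {z : ℂ} (hz : ‖z‖ < 1) :
    HasSum (fun k : ℕ+ => z ^ (k:ℕ) / (k:ℂ)) (-Complex.log (1 - z)) := by
  have h := Complex.hasSum_taylorSeries_neg_log hz
  have hsupp : ∀ n : ℕ, n ∉ Set.range (fun k : ℕ+ => (k:ℕ)) → z ^ n / (n:ℂ) = 0 := by
    intro n hn
    have : n = 0 := by
      by_contra h0
      exact hn ⟨⟨n, Nat.pos_of_ne_zero h0⟩, rfl⟩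
    simp [this]
  exact (Function.Injective.hasSum_iff (fun a b hab => by
    exact PNat.coe_injective hab) hsupp).mpr h

lemma deriv_r (r : ℝ) (hr : r ∈ Set.Ioo (0:ℝ) 1) (x : ℝ) :
    HasDerivAt (fun θ : ℝ => -(∑' k : ℕ+, (r:ℂ)^(k:ℕ) * Complex.exp (I * k * θ) / (k:ℂ)^2))
      (I * Complex.log (1 - r * Complex.exp (I * x))) x := by
  have hr0 : (0:ℝ) ≤ r := hr.1.le
  have hsumu : Summable (fun k : ℕ+ => r ^ (k:ℕ)) :=
    (summable_geometric_of_lt_one hr0 hr.2).subtype _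
  have hnorm : ∀ (k : ℕ+) (y : ℝ),
      ‖(r:ℂ)^(k:ℕ) * (I * k) * Complex.exp (I * k * y) / (k:ℂ)^2‖ ≤ r ^ (k:ℕ) := by
    intro k y
    have hk1 : (1:ℝ) ≤ ((k:ℕ):ℝ) := by exact_mod_cast k.one_le
    rw [norm_div, norm_mul, norm_mul, norm_exp_I_mul]
    simp only [norm_mul, norm_pow, Complex.norm_real, Complex.norm_I, Complex.norm_natCast,
      Real.norm_eq_abs, _root_.abs_of_nonneg hr0, one_mul, mul_one]
    calc r ^ (k:ℕ) * ((k:ℕ):ℝ) / ((k:ℕ):ℝ)^2 = r ^ (k:ℕ) / (k:ℕ) := by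
            have hk0 : ((k:ℕ):ℝ) ≠ 0 := by positivity
            rw [pow_two, mul_div_assoc, div_mul_cancel_left₀ hk0, ← div_eq_mul_inv]
      _ ≤ r ^ (k:ℕ) / 1 :=
            div_le_div_of_nonneg_left (by positivity) (by norm_num) hk1
      _ = r ^ (k:ℕ) := by ring
  have h0sum : Summable (fun k : ℕ+ => (r:ℂ)^(k:ℕ) * Complex.exp (I * k * ((0:ℝ):ℂ)) / (k:ℂ)^2) := by
    refine Summable.of_norm_bounded hsumu ?_
    intro k
    have hk1 : (1:ℝ) ≤ ((k:ℕ):ℝ) := by exact_mod_cast k.one_le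
    rw [norm_div, norm_mul, norm_exp_I_mul]
    simp only [norm_pow, Complex.norm_real, Complex.norm_natCast, Real.norm_eq_abs,
      _root_.abs_of_nonneg hr0, mul_one]
    calc r ^ (k:ℕ) / ((k:ℕ):ℝ)^2 ≤ r ^ (k:ℕ) / 1 :=
          div_le_div_of_nonneg_left (by positivity) (by norm_num) (by nlinarith)
      _ = r ^ (k:ℕ) := by ring
  have hd := hasDerivAt_tsum (u := fun k : ℕ+ => r ^ (k:ℕ)) hsumu
      (fun k y => term_hasDerivAt r k y) (fun k y => hnorm k y) h0sum x
  have hz : ‖(r:ℂ) * Complex.exp (I * (x:ℂ))‖ < 1 := by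
    rw [norm_mul, show ‖Complex.exp (I * (x:ℂ))‖ = 1 by
      rw [Complex.norm_exp]; simp]
    simp only [Complex.norm_real, Real.norm_eq_abs, _root_.abs_of_nonneg hr0, mul_one]
    exact hr.2
  have hlog := (pnat_hasSum_log hz).mul_left I
  have termeq : ∀ k : ℕ+, I * (((r:ℂ) * Complex.exp (I * (x:ℂ))) ^ (k:ℕ) / ((k:ℕ):ℂ))
      = (r:ℂ)^(k:ℕ) * (I * k) * Complex.exp (I * k * x) / (k:ℂ)^2 := by
    intro k
    have hk0 : ((k:ℕ):ℂ) ≠ 0 := by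
      exact_mod_cast (Nat.cast_ne_zero (R := ℂ)).mpr k.pos.ne'
    rw [mul_pow, ← Complex.exp_nat_mul,
      show ((k:ℕ):ℂ) * (I * (x:ℂ)) = I * (k:ℕ) * (x:ℂ) by ring]
    field_simp
  simp only [termeq] at hlog
  refine hd.neg.congr_deriv ?_
  rw [hlog.tsum_eq]
  ring

lemma slit_mem {r x : ℝ} (hr : r ∈ Set.Icc (0:ℝ) 1) (hx : 0 < x) (hx2 : x < 2 * π) :
    1 - (r:ℂ) * Complex.exp (I * x) ∈ Complex.slitPlane := by
  rw [show I * (x:ℂ) = (x:ℂ) * I from mul_comm _ _, Complex.exp_mul_I,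
    ← Complex.ofReal_cos, ← Complex.ofReal_sin]
  rw [Complex.mem_slitPlane_iff]
  by_cases hs : Real.sin x = 0
  · left
    rcases Real.sin_eq_zero_iff_cos_eq.mp hs with hc | hc
    · exfalso
      have := Real.cos_eq_one_iff_of_lt_of_lt (x := x) (by nlinarith [Real.pi_pos]) hx2
      rw [this] at hc
      exact hx.ne' hc
    · simp only [Complex.sub_re, Complex.one_re, Complex.mul_re, Complex.add_re,
        Complex.ofReal_re, Complex.mul_im, Complex.add_im, Complex.ofReal_im, Complex.I_re,
        Complex.I_im, hc]
      nlinarith [hr.1, hr.2]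
  · by_cases hr0 : r = 0
    · left
      simp [hr0]
    · right
      have hrpos : 0 < r := lt_of_le_of_ne hr.1 (Ne.symm hr0)
      simp only [Complex.sub_im, Complex.one_im, Complex.mul_im, Complex.add_re,
        Complex.ofReal_re, Complex.mul_re, Complex.add_im, Complex.ofReal_im, Complex.I_re,
        Complex.I_im]
      simp only [mul_zero, mul_one, zero_mul, add_zero, zero_add, zero_sub, neg_ne_zero]
      exact mul_ne_zero hrpos.ne' hs

/-- Base case of the recursion backbone: for `θ ∈ (0, 2π)`,
`d/dθ F₂(θ) = F₁(θ)`, i.e. the derivative of `-∑_{k≥1} e^{ikθ}/k²`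
is `i · log(1 - e^{iθ})` (principal branch). -/
theorem backbone_base_case (θ : ℝ) (hθ : θ ∈ Set.Ioo 0 (2 * π)) :
    HasDerivAt
      (fun θ : ℝ => -(∑' k : ℕ+, Complex.exp (I * k * θ) / (k : ℂ) ^ 2))
      (I * Complex.log (1 - Complex.exp (I * θ))) θ := by
  obtain ⟨hθ0, hθ2⟩ := hθ
  set c : ℝ := θ / 2 with hc
  set d : ℝ := θ / 2 + π with hd
  have hπ := Real.pi_pos
  have hc0 : 0 < c := by positivity
  have hd2 : d < 2 * π := by rw [hd]; linarith
  have hcd : ∀ x ∈ Set.Icc c d, 0 < x ∧ x < 2 * π := by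
    intro x hx
    exact ⟨lt_of_lt_of_le hc0 hx.1, lt_of_le_of_lt hx.2 hd2⟩
  have hθs : θ ∈ Set.Ioo c d := ⟨by rw [hc]; linarith, by rw [hd]; linarith⟩
  -- the family of functions and derivatives
  set F : ℝ → ℝ → ℂ := fun r θ => -(∑' k : ℕ+, (r:ℂ)^(k:ℕ) * Complex.exp (I * k * θ) / (k:ℂ)^2)
    with hF
  -- the compact set and uniform continuity
  set g : ℝ × ℝ → ℂ := fun p => I * Complex.log (1 - (p.1:ℂ) * Complex.exp (I * p.2)) with hg
  set F' : ℝ → ℝ → ℂ := fun r x => g (r, x) with hF'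
  set K : Set (ℝ × ℝ) := Set.Icc (0:ℝ) 1 ×ˢ Set.Icc c d with hK
  have hKc : IsCompact K := isCompact_Icc.prod isCompact_Icc
  have hgc : ContinuousOn g K := by
    refine ContinuousOn.mul continuousOn_const ?_
    have h1 : Continuous (fun p : ℝ × ℝ => 1 - (p.1:ℂ) * Complex.exp (I * p.2)) := by
      fun_prop
    exact h1.continuousOn.clog (fun p hp => slit_mem hp.1 (hcd _ hp.2).1 (hcd _ hp.2).2)
  have hu : UniformContinuousOn g K := hKc.uniformContinuousOn_of_continuous hgc
  -- uniform convergence of derivatives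
  have huc : TendstoUniformlyOn F' (F' 1) (nhdsWithin 1 (Set.Iio 1)) (Set.Ioo c d) := by
    rw [Metric.tendstoUniformlyOn_iff]
    intro ε hε
    obtain ⟨δ, hδ0, hδ⟩ := Metric.uniformContinuousOn_iff.mp hu ε hε
    have hmem : Set.Ioo (max 0 (1 - δ)) 1 ∈ nhdsWithin (1:ℝ) (Set.Iio 1) :=
      Ioo_mem_nhdsLT_of_mem ⟨by simp [hδ0], le_refl 1⟩
    filter_upwards [hmem] with r hr x hx
    have hr1 : r ∈ Set.Icc (0:ℝ) 1 := ⟨le_trans (le_max_left _ _) hr.1.le, hr.2.le⟩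
    have h1K : ((1:ℝ), x) ∈ K := ⟨Set.mem_Icc.mpr ⟨zero_le_one, le_refl 1⟩,
      ⟨hx.1.le, hx.2.le⟩⟩
    have hrK : (r, x) ∈ K := ⟨hr1, ⟨hx.1.le, hx.2.le⟩⟩
    have hdist : dist ((1:ℝ), x) (r, x) < δ := by
      rw [Prod.dist_eq, Real.dist_eq]
      simp only [dist_self]
      rw [max_eq_left (abs_nonneg _)]
      rw [_root_.abs_of_nonneg (by linarith [hr.2] : (0:ℝ) ≤ 1 - r)]
      have := hr.1
      have := lt_of_le_of_lt (le_max_right 0 (1 - δ)) this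
      linarith
    show dist (g (1, x)) (g (r, x)) < ε
    exact hδ _ h1K _ hrK hdist
  have hF1 : ∀ x, F' 1 x = I * Complex.log (1 - Complex.exp (I * x)) := by
    intro x; simp [hF', hg]
  -- eventual differentiability
  have hev : ∀ᶠ r in nhdsWithin (1:ℝ) (Set.Iio 1), ∀ x ∈ Set.Ioo c d,
      HasDerivAt (F r) (F' r x) x := by
    filter_upwards [Ioo_mem_nhdsLT_of_mem (⟨by norm_num, le_refl 1⟩ : (1:ℝ) ∈ Set.Ioc 0 1)]
      with r hr x _
    exact deriv_r r hr x
  -- pointwise convergence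
  have hptw : ∀ x ∈ Set.Ioo c d, Tendsto (fun r => F r x) (nhdsWithin (1:ℝ) (Set.Iio 1))
      (nhds (-(∑' k : ℕ+, Complex.exp (I * k * x) / (k:ℂ)^2))) := by
    intro x _
    refine Tendsto.neg ?_
    refine tendsto_tsum_of_dominated_convergence
      (bound := fun k : ℕ+ => 1 / ((k:ℕ):ℝ)^2) ?_ ?_ ?_
    · have : Summable (fun n : ℕ => 1 / ((n:ℝ))^2) := by
        simpa using Real.summable_one_div_nat_pow.mpr (by norm_num : 1 < 2)
      exact this.subtype _
    · intro k
      have hcont : Continuous (fun r : ℝ => (r:ℂ)^(k:ℕ) * Complex.exp (I * k * x) / (k:ℂ)^2) := by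
        fun_prop
      have := (hcont.tendsto 1).mono_left (nhdsWithin_le_nhds (s := Set.Iio 1))
      simpa using this
    · filter_upwards [Ioo_mem_nhdsLT_of_mem (⟨by norm_num, le_refl 1⟩ : (1:ℝ) ∈ Set.Ioc 0 1)]
        with r hr k
      have hk1 : (1:ℝ) ≤ ((k:ℕ):ℝ) := by exact_mod_cast k.one_le
      rw [norm_div, norm_mul, norm_exp_I_mul]
      simp only [norm_pow, Complex.norm_real, Complex.norm_natCast, Real.norm_eq_abs,
        _root_.abs_of_nonneg hr.1.le, mul_one]
      rw [div_le_div_iff₀ (by positivity) (by positivity)]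
      have : r ^ (k:ℕ) ≤ 1 := pow_le_one₀ hr.1.le hr.2.le
      nlinarith
  have := hasDerivAt_of_tendstoUniformlyOn isOpen_Ioo huc hev hptw hθs
  simpa [hF1] using this
end

section
/- For every compact set K ⊆ ℂ, the functions z ↦ T(z; q) converge uniformly on K to z ↦ sin(πz) as q tends to 0 within the open unit disc; that is, for every ε > 0 there exists δ > 0 such that for all q ∈ ℂ with 0 < ‖q‖ < δ (and ‖q‖ < 1) and all z ∈ K, ‖T(z; q) − sin(πz)‖ < ε. -/
open Complex Real Filter

/-- The theta series `T(z; q) = ∑_{n≥0} (-1)^n q^{n(n+1)} sin((2n+1)πz)` for `‖q‖ < 1`. -/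
noncomputable def thetaSeries (z q : ℂ) : ℂ :=
  ∑' n : ℕ, (-1) ^ n * q ^ (n * (n + 1)) * Complex.sin ((2 * (n : ℂ) + 1) * (π : ℂ) * z)

lemma mynorm_sin_le (w : ℂ) : ‖Complex.sin w‖ ≤ Real.exp ‖w‖ := by
  have he : ∀ v : ℂ, ‖Complex.exp v‖ ≤ Real.exp ‖v‖ := by
    intro v
    rw [Complex.norm_exp]
    exact Real.exp_le_exp.2 (Complex.re_le_norm v)
  rw [Complex.sin, norm_div, norm_mul, Complex.norm_I, mul_one]
  have h2 : ‖(2:ℂ)‖ = 2 := by norm_num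
  calc ‖Complex.exp (-w*I) - Complex.exp (w*I)‖ / ‖(2:ℂ)‖
      ≤ (‖Complex.exp (-w*I)‖ + ‖Complex.exp (w*I)‖)/2 := by
        rw [h2]; gcongr; exact norm_sub_le _ _
    _ ≤ (Real.exp ‖w‖ + Real.exp ‖w‖)/2 := by
        gcongr
        · exact (he _).trans (by simp)
        · exact (he _).trans (by simp)
    _ = Real.exp ‖w‖ := by ring

lemma myterm_bound (z q : ℂ) (R : ℝ) (hR : 0 ≤ R) (hz : ‖z‖ ≤ R) (hq : ‖q‖ ≤ 1) (n : ℕ) :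
    ‖(-1:ℂ) ^ n * q ^ (n * (n + 1)) * Complex.sin ((2 * (n : ℂ) + 1) * (π : ℂ) * z)‖
      ≤ Real.exp (3*π*R) * (‖q‖^2 * Real.exp (2*π*R))^n := by
  have hq0 : (0:ℝ) ≤ ‖q‖ := norm_nonneg q
  have hπ : (0:ℝ) ≤ π := Real.pi_nonneg
  have hnorm : ‖(2 * (n : ℂ) + 1) * (π : ℂ) * z‖ = (2*n+1) * π * ‖z‖ := by
    rw [norm_mul, norm_mul]
    congr 2
    · have : (2 * (n : ℂ) + 1) = ((2*n+1 : ℕ) : ℂ) := by push_cast; ring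
      rw [this, Complex.norm_natCast]; push_cast; ring
    · simp [_root_.abs_of_nonneg hπ]
  have hsin : ‖Complex.sin ((2 * (n : ℂ) + 1) * (π : ℂ) * z)‖ ≤ Real.exp ((2*n+1)*π*R) := by
    refine (mynorm_sin_le _).trans ?_
    rw [hnorm]
    refine Real.exp_le_exp.2 ?_
    have : (0:ℝ) ≤ (2*n+1)*π := by positivity
    nlinarith
  calc ‖(-1:ℂ) ^ n * q ^ (n * (n + 1)) * Complex.sin ((2 * (n : ℂ) + 1) * (π : ℂ) * z)‖
      = ‖q‖^(n*(n+1)) * ‖Complex.sin ((2 * (n : ℂ) + 1) * (π : ℂ) * z)‖ := by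
        rw [norm_mul, norm_mul, norm_pow, norm_pow, norm_neg, norm_one, one_pow, one_mul]
    _ ≤ ‖q‖^(2*n) * Real.exp ((2*n+1)*π*R) := by
        gcongr ?_ * ?_
        · refine pow_le_pow_of_le_one hq0 hq ?_
          rcases Nat.eq_zero_or_pos n with h|h
          · simp [h]
          · calc 2*n = n*2 := Nat.mul_comm _ _
              _ ≤ n*(n+1) := Nat.mul_le_mul_left n (by omega)
    _ ≤ Real.exp (3*π*R) * (‖q‖^2 * Real.exp (2*π*R))^n := by
        rw [mul_pow, pow_mul, ← Real.exp_nat_mul]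
        rw [show Real.exp (3*π*R) * ((‖q‖^2)^n * Real.exp (↑n * (2*π*R)))
            = (‖q‖^2)^n * (Real.exp (3*π*R) * Real.exp (↑n * (2*π*R))) by ring,
          ← Real.exp_add]
        gcongr
        have h1 : (0:ℝ) ≤ π*R := by positivity
        have h2 : (0:ℝ) ≤ (n:ℝ) := Nat.cast_nonneg n
        nlinarith

/-- Uniform trigonometric degeneration on compacts: for every compact `K ⊆ ℂ`
and every `ε > 0` there is `δ > 0` such that for all `q` with `0 < ‖q‖ < δ`
and `‖q‖ < 1` and all `z ∈ K`, `‖T(z; q) - sin(πz)‖ < ε`. -/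
theorem theta_trig_degeneration_uniform (K : Set ℂ) (hK : IsCompact K) :
    ∀ ε > (0 : ℝ), ∃ δ > (0 : ℝ), ∀ q : ℂ, 0 < ‖q‖ → ‖q‖ < δ → ‖q‖ < 1 →
      ∀ z ∈ K, ‖thetaSeries z q - Complex.sin ((π : ℂ) * z)‖ < ε := by
  intro ε hε
  obtain ⟨R0, hR0⟩ := hK.isBounded.exists_norm_le
  set R : ℝ := max R0 0 with hRdef
  have hR : 0 ≤ R := le_max_right _ _
  have hzR : ∀ z ∈ K, ‖z‖ ≤ R := fun z hz => (hR0 z hz).trans (le_max_left _ _)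
  set C : ℝ := Real.exp (3*π*R) with hCdef
  set E : ℝ := Real.exp (2*π*R) with hEdef
  have hC : 0 < C := Real.exp_pos _
  have hE : 0 < E := Real.exp_pos _
  set m : ℝ := min ((2*E)⁻¹) (ε/(2*C*E)) with hmdef
  have hm : 0 < m := lt_min (by positivity) (by positivity)
  refine ⟨Real.sqrt m, Real.sqrt_pos.2 hm, ?_⟩
  intro q _ hqδ hq1 z hz
  have hq2 : ‖q‖^2 < m := by
    have := (Real.lt_sqrt (norm_nonneg q)).1 hqδ
    linarith [this]
  set s : ℝ := ‖q‖^2 * E with hsdef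
  have hs0 : 0 ≤ s := by positivity
  have hs2 : s < 1/2 := by
    have h1 : ‖q‖^2 < (2*E)⁻¹ := lt_of_lt_of_le hq2 (min_le_left _ _)
    calc s < (2*E)⁻¹ * E := by apply mul_lt_mul_of_pos_right h1 hE
      _ = 1/2 := by field_simp
  have hs1 : s < 1 := by linarith
  set f : ℕ → ℂ := fun n => (-1:ℂ) ^ n * q ^ (n * (n + 1)) *
    Complex.sin ((2 * (n : ℂ) + 1) * (π : ℂ) * z) with hfdef
  have hbound : ∀ n, ‖f n‖ ≤ C * s^n :=
    fun n => myterm_bound z q R hR (hzR z hz) hq1.le n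
  have hsum : Summable f :=
    Summable.of_norm_bounded ((summable_geometric_of_lt_one hs0 hs1).mul_left C) hbound
  have hsplit : thetaSeries z q = f 0 + ∑' n, f (n+1) := Summable.tsum_eq_zero_add hsum
  have hf0 : f 0 = Complex.sin ((π : ℂ) * z) := by
    simp [hfdef]
  have htail : ‖∑' n, f (n+1)‖ ≤ C * s * (1-s)⁻¹ := by
    refine tsum_of_norm_bounded ((hasSum_geometric_of_lt_one hs0 hs1).mul_left (C*s)) ?_
    intro n
    calc ‖f (n+1)‖ ≤ C * s^(n+1) := hbound (n+1)
      _ = C * s * s^n := by rw [pow_succ']; ring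
  have hfinal : C * s * (1-s)⁻¹ < ε := by
    have h2 : ‖q‖^2 < ε/(2*C*E) := lt_of_lt_of_le hq2 (min_le_right _ _)
    have hCs : C * s ≤ C * s := le_refl _
    have hinv : (1-s)⁻¹ ≤ 2 := by
      rw [inv_le_comm₀ (by linarith) (by norm_num)]
      linarith
    have hCs2 : 2 * (C * s) < ε := by
      have : 2*C*E*(‖q‖^2) < 2*C*E*(ε/(2*C*E)) := by
        apply mul_lt_mul_of_pos_left h2 (by positivity)
      rw [mul_div_cancel₀] at this
      · rw [hsdef]; nlinarith
      · positivity
    nlinarith [mul_nonneg (mul_nonneg hC.le hs0) (by norm_num : (0:ℝ) ≤ 1)]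
  calc ‖thetaSeries z q - Complex.sin ((π : ℂ) * z)‖
      = ‖∑' n, f (n+1)‖ := by rw [hsplit, hf0, add_sub_cancel_left]
    _ ≤ C * s * (1-s)⁻¹ := htail
    _ < ε := hfinal
end

section
/- For every q ∈ ℂ with ‖q‖ < 1, the function z ↦ T(z; q) is differentiable at z = 0 with derivative π·D(q); that is, HasDerivAt (fun z => ∑' n : ℕ, (-1)^n * q^(n*(n+1)) * Complex.sin ((2*n+1)*π*z)) (π * ∑' n : ℕ, (-1)^n * (2*n+1) * q^(n*(n+1))) 0. -/
open Complex Real Filter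

private lemma norm_cos_le_exp (w : ℂ) : ‖Complex.cos w‖ ≤ Real.exp ‖w‖ := by
  have h1 : ‖Complex.exp (w * Complex.I)‖ ≤ Real.exp ‖w‖ := by
    rw [Complex.norm_exp]
    apply Real.exp_le_exp.2
    simp only [Complex.mul_I_re]
    calc -w.im ≤ |w.im| := neg_le_abs _
      _ ≤ ‖w‖ := Complex.abs_im_le_norm w
  have h2 : ‖Complex.exp (-w * Complex.I)‖ ≤ Real.exp ‖w‖ := by
    rw [Complex.norm_exp]
    apply Real.exp_le_exp.2
    simp only [Complex.mul_I_re, Complex.neg_im, neg_neg]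
    calc w.im ≤ |w.im| := le_abs_self _
      _ ≤ ‖w‖ := Complex.abs_im_le_norm w
  calc ‖Complex.cos w‖ = ‖Complex.exp (w * Complex.I) + Complex.exp (-w * Complex.I)‖ / 2 := by
        rw [Complex.cos, norm_div]; norm_num
    _ ≤ (Real.exp ‖w‖ + Real.exp ‖w‖) / 2 := by
        apply div_le_div_of_nonneg_right ?_ (by norm_num) |>.trans_eq rfl
        exact (norm_add_le _ _).trans (add_le_add h1 h2)
    _ = Real.exp ‖w‖ := by ring

/-- Derivative of the theta series at the origin: for `‖q‖ < 1`, the function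
`z ↦ T(z; q) = ∑_{n≥0} (-1)^n q^{n(n+1)} sin((2n+1)πz)` is differentiable at
`z = 0` with derivative `π · D(q)`, where `D(q) = ∑_{n≥0} (-1)^n (2n+1) q^{n(n+1)}`. -/
theorem theta_deriv_at_zero (q : ℂ) (hq : ‖q‖ < 1) :
    HasDerivAt
      (fun z : ℂ => ∑' n : ℕ,
        (-1) ^ n * q ^ (n * (n + 1)) * Complex.sin ((2 * (n : ℂ) + 1) * (π : ℂ) * z))
      ((π : ℂ) * ∑' n : ℕ, (-1) ^ n * (2 * (n : ℂ) + 1) * q ^ (n * (n + 1))) 0 := by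
  set x : ℝ := ‖q‖ with hx
  have hx0 : 0 ≤ x := norm_nonneg q
  -- the dominating sequence
  set u : ℕ → ℝ := fun n => Real.pi * (2 * n + 1) * Real.exp ((2 * n + 1) * Real.pi)
      * x ^ (n * (n + 1)) with hu
  have hu_nonneg : ∀ n, 0 ≤ u n := fun n => by positivity
  -- summability of u via ratio test
  have hv : Summable (fun n : ℕ => (2 * (n : ℝ) + 3) * x ^ n) := by
    have h1 : Summable (fun n : ℕ => (n : ℝ) ^ 1 * x ^ n) :=
      summable_pow_mul_geometric_of_norm_lt_one 1 (by rwa [Real.norm_eq_abs, _root_.abs_of_nonneg hx0])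
    have h2 : Summable (fun n : ℕ => x ^ n) := summable_geometric_of_lt_one hx0 hq
    have := (h1.mul_left 2).add (h2.mul_left 3)
    exact this.congr fun n => by ring
  have hv0 : Tendsto (fun n : ℕ => (2 * (n : ℝ) + 3) * x ^ n) atTop (nhds 0) :=
    hv.tendsto_atTop_zero
  have husum : Summable u := by
    apply summable_of_ratio_norm_eventually_le (r := 1/2) (by norm_num)
    have hev : ∀ᶠ n : ℕ in atTop, (2 * (n : ℝ) + 3) * x ^ n ≤ Real.exp (-(2 * Real.pi)) / 2 := by
      apply hv0.eventually_le_const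
      positivity
    filter_upwards [hev] with n hn
    rw [Real.norm_eq_abs, Real.norm_eq_abs, _root_.abs_of_nonneg (hu_nonneg _),
      _root_.abs_of_nonneg (hu_nonneg _)]
    have key : (2 * (n : ℝ) + 3) * x ^ (2 * n + 2) * Real.exp (2 * Real.pi) ≤ 1 / 2 := by
      have hxp : x ^ (2 * n + 2) ≤ x ^ n := by
        calc x ^ (2 * n + 2) = x ^ n * x ^ (n + 2) := by ring
          _ ≤ x ^ n * 1 := by
              apply mul_le_mul_of_nonneg_left _ (by positivity)
              exact pow_le_one₀ hx0 hq.le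
          _ = x ^ n := mul_one _
      have h3 : (2 * (n : ℝ) + 3) * x ^ (2 * n + 2) ≤ Real.exp (-(2 * Real.pi)) / 2 := by
        refine le_trans ?_ hn
        exact mul_le_mul_of_nonneg_left hxp (by positivity)
      calc (2 * (n : ℝ) + 3) * x ^ (2 * n + 2) * Real.exp (2 * Real.pi)
          ≤ Real.exp (-(2 * Real.pi)) / 2 * Real.exp (2 * Real.pi) := by
            apply mul_le_mul_of_nonneg_right h3 (Real.exp_pos _).le
        _ = 1 / 2 := by
            rw [div_mul_eq_mul_div, ← Real.exp_add]; norm_num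
    -- u (n+1) ≤ (1/2) * u n
    have expand : u (n + 1) =
        ((2 * (n : ℝ) + 3) * x ^ (2 * n + 2) * Real.exp (2 * Real.pi)) *
          (Real.pi * Real.exp ((2 * n + 1) * Real.pi) * x ^ (n * (n + 1))) := by
      simp only [hu]
      rw [show ((n : ℕ) + 1) * ((n + 1) + 1) = n * (n + 1) + (2 * n + 2) by ring, pow_add]
      push_cast
      rw [show (2 * ((n : ℝ) + 1) + 1) * Real.pi = (2 * n + 1) * Real.pi + 2 * Real.pi by ring,
        Real.exp_add]
      ring
    rw [expand]
    calc ((2 * (n : ℝ) + 3) * x ^ (2 * n + 2) * Real.exp (2 * Real.pi)) *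
          (Real.pi * Real.exp ((2 * n + 1) * Real.pi) * x ^ (n * (n + 1)))
        ≤ (1 / 2) * (Real.pi * Real.exp ((2 * n + 1) * Real.pi) * x ^ (n * (n + 1))) := by
          apply mul_le_mul_of_nonneg_right key (by positivity)
      _ ≤ (1 / 2) * u n := by
          apply mul_le_mul_of_nonneg_left _ (by norm_num)
          simp only [hu]
          have h1 : (1 : ℝ) ≤ 2 * n + 1 := by
            have := Nat.cast_nonneg (α := ℝ) n; linarith
          have h2 : 0 ≤ Real.pi * Real.exp ((2 * (n : ℝ) + 1) * Real.pi) * x ^ (n * (n + 1)) := by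
            positivity
          nlinarith [mul_le_mul_of_nonneg_right h1 h2]
  -- term functions and derivatives
  set g : ℕ → ℂ → ℂ := fun n z =>
    (-1) ^ n * q ^ (n * (n + 1)) * Complex.sin ((2 * (n : ℂ) + 1) * (π : ℂ) * z) with hg
  set g' : ℕ → ℂ → ℂ := fun n z =>
    (-1) ^ n * q ^ (n * (n + 1)) *
      (Complex.cos ((2 * (n : ℂ) + 1) * (π : ℂ) * z) * ((2 * (n : ℂ) + 1) * (π : ℂ))) with hg'
  have hderiv : ∀ n : ℕ, ∀ z : ℂ, z ∈ Metric.ball (0 : ℂ) 1 → HasDerivAt (g n) (g' n z) z := by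
    intro n z _
    have h1 : HasDerivAt (fun w : ℂ => (2 * (n : ℂ) + 1) * (π : ℂ) * w)
        ((2 * (n : ℂ) + 1) * (π : ℂ)) z := by
      simpa using (hasDerivAt_id z).const_mul ((2 * (n : ℂ) + 1) * (π : ℂ))
    have h2 : HasDerivAt (fun w : ℂ => Complex.sin ((2 * (n : ℂ) + 1) * (π : ℂ) * w))
        (Complex.cos ((2 * (n : ℂ) + 1) * (π : ℂ) * z) * ((2 * (n : ℂ) + 1) * (π : ℂ))) z :=
      (Complex.hasDerivAt_sin _).comp z h1
    exact h2.const_mul _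
  have hbound : ∀ n : ℕ, ∀ z : ℂ, z ∈ Metric.ball (0 : ℂ) 1 → ‖g' n z‖ ≤ u n := by
    intro n z hz
    rw [Metric.mem_ball, dist_zero_right] at hz
    have hnc : ‖(2 * (n : ℂ) + 1)‖ = 2 * (n : ℝ) + 1 := by
      rw [show (2 * (n : ℂ) + 1) = ((2 * (n : ℝ) + 1 : ℝ) : ℂ) by push_cast; ring,
        Complex.norm_real, Real.norm_eq_abs, _root_.abs_of_nonneg (by positivity)]
    have hpi : ‖(π : ℂ)‖ = Real.pi := by
      rw [Complex.norm_real, Real.norm_eq_abs, _root_.abs_of_nonneg Real.pi_pos.le]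
    have hcos : ‖Complex.cos ((2 * (n : ℂ) + 1) * (π : ℂ) * z)‖
        ≤ Real.exp ((2 * n + 1) * Real.pi) := by
      refine (norm_cos_le_exp _).trans (Real.exp_le_exp.2 ?_)
      rw [norm_mul, norm_mul, hnc, hpi]
      calc (2 * (n : ℝ) + 1) * Real.pi * ‖z‖ ≤ (2 * (n : ℝ) + 1) * Real.pi * 1 := by
            apply mul_le_mul_of_nonneg_left hz.le (by positivity)
        _ = (2 * (n : ℝ) + 1) * Real.pi := mul_one _
    simp only [hg', norm_mul, norm_pow, norm_neg, norm_one, one_pow, one_mul, hnc, hpi]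
    rw [hu]
    calc x ^ (n * (n + 1)) * (‖Complex.cos ((2 * (n : ℂ) + 1) * (π : ℂ) * z)‖ *
          ((2 * (n : ℝ) + 1) * Real.pi))
        ≤ x ^ (n * (n + 1)) * (Real.exp ((2 * n + 1) * Real.pi) * ((2 * (n : ℝ) + 1) * Real.pi)) := by
          apply mul_le_mul_of_nonneg_left _ (by positivity)
          apply mul_le_mul_of_nonneg_right hcos (by positivity)
      _ = Real.pi * (2 * n + 1) * Real.exp ((2 * n + 1) * Real.pi) * x ^ (n * (n + 1)) := by ring
  have hz0 : (0 : ℂ) ∈ Metric.ball (0 : ℂ) 1 := by simp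
  have hsum0 : Summable (fun n => g n 0) := by
    have : (fun n => g n 0) = fun _ => (0 : ℂ) := by
      funext n; simp [hg]
    rw [this]; exact summable_zero
  have main := hasDerivAt_tsum_of_isPreconnected husum Metric.isOpen_ball
    ((convex_ball (0:ℂ) 1).isPreconnected) hderiv hbound hz0 hsum0 hz0
  have : (∑' n : ℕ, g' n 0) =
      (π : ℂ) * ∑' n : ℕ, (-1) ^ n * (2 * (n : ℂ) + 1) * q ^ (n * (n + 1)) := by
    rw [← tsum_mul_left]
    apply tsum_congr
    intro n
    simp only [hg', mul_zero, Complex.cos_zero]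
    ring
  rw [this] at main
  exact main
end
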